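/- Let Q be a left quasigroup and α a congruence of Q with α ≤ ζ_Q. Then Dis_α is contained in the center of Dis(Q), and the pointwise stabilizers satisfy Dis(Q)_x = Dis(Q)_y whenever x α y. -/

import Mathlib

namespace PaperLQ

/-- A left quasigroup `(Q, ⬝, \)`: `x ⬝ (x \ y) = y = x \ (x ⬝ y)`. -/
structure LeftQuasigroup (Q : Type*) where
  mul : Q → Q → Q
  ldiv : Q → Q → Q
  mul_ldiv : ∀ x y, mul x (ldiv x y) = y
  ldiv_mul : ∀ x y, ldiv x (mul x y) = y

namespace LeftQuasigroup

variable {Q : Type*}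

/-- The left translation `L_x : y ↦ x ⬝ y`, as a permutation of `Q`. -/
def L (S : LeftQuasigroup Q) (x : Q) : Equiv.Perm Q where
  toFun := S.mul x
  invFun := S.ldiv x
  left_inv := S.ldiv_mul x
  right_inv := S.mul_ldiv x

/-- The left multiplication group `LMlt(Q) = ⟨L_x : x ∈ Q⟩`. -/
def LMlt (S : LeftQuasigroup Q) : Subgroup (Equiv.Perm Q) :=
  Subgroup.closure (Set.range S.L)

/-- The displacement group `Dis(Q) = ⟨L_x L_y⁻¹ : x, y ∈ Q⟩`. -/
def Dis (S : LeftQuasigroup Q) : Subgroup (Equiv.Perm Q) :=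
  Subgroup.closure {g : Equiv.Perm Q | ∃ x y : Q, g = S.L x * (S.L y)⁻¹}

/-- The orbit equivalence `O_N` of a subgroup `N`: `x O_N y` iff `x = h y` for some `h ∈ N`. -/
def orbRel (N : Subgroup (Equiv.Perm Q)) : Setoid Q where
  r x y := ∃ h ∈ N, x = h y
  iseqv := by
    constructor
    · exact fun x => ⟨1, N.one_mem, rfl⟩
    · rintro x y ⟨h, hh, rfl⟩
      exact ⟨h⁻¹, N.inv_mem hh, (Equiv.symm_apply_apply h y).symm⟩
    · rintro x y z ⟨h, hh, rfl⟩ ⟨k, hk, rfl⟩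
      exact ⟨h * k, N.mul_mem hh hk, (Equiv.Perm.mul_apply h k z).symm⟩

/-- The equivalence `c_N`: `x c_N y` iff `L_x L_y⁻¹ ∈ N`. -/
def cRel (S : LeftQuasigroup Q) (N : Subgroup (Equiv.Perm Q)) : Setoid Q where
  r x y := S.L x * (S.L y)⁻¹ ∈ N
  iseqv := by
    constructor
    · intro x; simpa using N.one_mem
    · intro x y h; simpa [mul_inv_rev] using N.inv_mem h
    · intro x y z h h'; simpa [mul_assoc] using N.mul_mem h h'

/-- The Cayley kernel `λ_Q`: `x λ_Q y` iff `L_x = L_y`. -/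
def cayley (S : LeftQuasigroup Q) : Setoid Q where
  r x y := S.L x = S.L y
  iseqv := ⟨fun _ => rfl, Eq.symm, Eq.trans⟩

/-- `α` is a congruence of the left quasigroup. -/
def IsCongruence (S : LeftQuasigroup Q) (α : Setoid Q) : Prop :=
  ∀ ⦃x y z t : Q⦄, α.r x z → α.r y t →
    α.r (S.mul x y) (S.mul z t) ∧ α.r (S.ldiv x y) (S.ldiv z t)

/-- The relative displacement group `Dis_α = ⟨h L_x L_y⁻¹ h⁻¹ : x α y, h ∈ LMlt(Q)⟩`. -/
def disRel (S : LeftQuasigroup Q) (α : Setoid Q) : Subgroup (Equiv.Perm Q) :=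
  Subgroup.closure
    {g : Equiv.Perm Q | ∃ x y h, α.r x y ∧ h ∈ S.LMlt ∧ g = h * (S.L x * (S.L y)⁻¹) * h⁻¹}

/-- The subgroup of permutations moving every point inside its `α`-class. -/
def apprSub (α : Setoid Q) : Subgroup (Equiv.Perm Q) where
  carrier := {h : Equiv.Perm Q | ∀ x : Q, α.r (h x) x}
  one_mem' := fun x => by
    simpa using α.iseqv.refl x
  mul_mem' := fun {a b} ha hb x => by
    rw [Equiv.Perm.mul_apply]
    exact α.iseqv.trans (ha (b x)) (hb x)
  inv_mem' := fun {a} ha x => by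
    have h := ha (a⁻¹ x)
    rw [show a (a⁻¹ x) = x from Equiv.apply_symm_apply a x] at h
    exact α.iseqv.symm h

/-- The group `Dis^α = {h ∈ Dis(Q) : h(x) α x for all x}`. -/
def disCo (S : LeftQuasigroup Q) (α : Setoid Q) : Subgroup (Equiv.Perm Q) :=
  S.Dis ⊓ apprSub α

/-- `N ∈ Norm'(Q)`: a normal subgroup of `LMlt(Q)` with `N ≤ Dis(Q)` and `O_N ≤ c_N`. -/
def MemNorm' (S : LeftQuasigroup Q) (N : Subgroup (Equiv.Perm Q)) : Prop :=
  N ≤ S.Dis ∧ (∀ h ∈ S.LMlt, ∀ n ∈ N, h * n * h⁻¹ ∈ N) ∧ orbRel N ≤ S.cRel N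

/-- The quotient left quasigroup `Q/α` for a congruence `α`. -/
def quot (S : LeftQuasigroup Q) (α : Setoid Q) (hα : S.IsCongruence α) :
    LeftQuasigroup (Quotient α) where
  mul := Quotient.lift₂ (fun x y => Quotient.mk α (S.mul x y))
    (fun _ _ _ _ h h' => Quotient.sound (hα h h').1)
  ldiv := Quotient.lift₂ (fun x y => Quotient.mk α (S.ldiv x y))
    (fun _ _ _ _ h h' => Quotient.sound (hα h h').2)
  mul_ldiv := fun a b => Quotient.inductionOn₂ a b fun x y => by
    show Quotient.mk α (S.mul x (S.ldiv x y)) = Quotient.mk α y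
    rw [S.mul_ldiv]
  ldiv_mul := fun a b => Quotient.inductionOn₂ a b fun x y => by
    show Quotient.mk α (S.ldiv x (S.mul x y)) = Quotient.mk α y
    rw [S.ldiv_mul]

/-- The image `π_α(N)` of a subgroup `N ≤ LMlt(Q)` in `Sym(Q/α)`: the permutations of
`Q/α` induced by some element of `N`. -/
def pushSub (α : Setoid Q) (N : Subgroup (Equiv.Perm Q)) :
    Subgroup (Equiv.Perm (Quotient α)) where
  carrier := {g | ∃ h ∈ N, ∀ x : Q, g (Quotient.mk α x) = Quotient.mk α (h x)}
  one_mem' := ⟨1, N.one_mem, fun x => rfl⟩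
  mul_mem' := fun {g₁ g₂} h₁ h₂ => by
    obtain ⟨k₁, hk₁, e₁⟩ := h₁
    obtain ⟨k₂, hk₂, e₂⟩ := h₂
    exact ⟨k₁ * k₂, N.mul_mem hk₁ hk₂, fun x => by
      rw [Equiv.Perm.mul_apply, Equiv.Perm.mul_apply, e₂ x, e₁ (k₂ x)]⟩
  inv_mem' := fun {g} h => by
    obtain ⟨k, hk, e⟩ := h
    refine ⟨k⁻¹, N.inv_mem hk, fun x => ?_⟩
    have h' := e (k⁻¹ x)
    rw [show k (k⁻¹ x) = x from Equiv.apply_symm_apply k x] at h'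
    rw [← h', show g⁻¹ (g ⟦k⁻¹ x⟧) = ⟦k⁻¹ x⟧ from Equiv.symm_apply_apply g _]

/-- `Q` is faithful if the Cayley kernel is trivial. -/
def Faithful (S : LeftQuasigroup Q) : Prop := S.cayley = ⊥

/-- `Q` is sharp: whenever `α ≤ β` are congruences with `β/α ≤ λ_{Q/α}`, then `α = β`. -/
def Sharp (S : LeftQuasigroup Q) : Prop :=
  ∀ (α β : Setoid Q) (hα : S.IsCongruence α), S.IsCongruence β → α ≤ β →
    (∀ x y : Q, β.r x y →
      (S.quot α hα).L (Quotient.mk α x) = (S.quot α hα).L (Quotient.mk α y)) →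
    α = β

/-- `Q` has congruences determined by orbits: `Dis^* : Con(Q) → Norm'(Q)` and
`O_* : Norm'(Q) → Con(Q)` are mutually inverse isomorphisms. -/
def CDOs (S : LeftQuasigroup Q) : Prop :=
  (∀ α : Setoid Q, S.IsCongruence α → orbRel (S.disCo α) = α) ∧
  (∀ N : Subgroup (Equiv.Perm Q), S.MemNorm' N → S.disCo (orbRel N) = N)

/-- `Q` has congruences determined by subgroups: `Dis_* : Con(Q) → Norm'(Q)` and
`c_* : Norm'(Q) → Con(Q)` are mutually inverse isomorphisms. -/
def CDSg (S : LeftQuasigroup Q) : Prop :=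
  (∀ α : Setoid Q, S.IsCongruence α → S.cRel (S.disRel α) = α) ∧
  (∀ N : Subgroup (Equiv.Perm Q), S.MemNorm' N → S.disRel (S.cRel N) = N)

/-- `Q` is connected: `LMlt(Q)` acts transitively. -/
def Connected (S : LeftQuasigroup Q) : Prop :=
  ∀ x y : Q, ∃ h ∈ S.LMlt, x = h y

/-- The subalgebra structure on a subset closed under `⬝` and `\`. -/
def sub (S : LeftQuasigroup Q) (T : Set Q)
    (hm : ∀ ⦃x⦄, x ∈ T → ∀ ⦃y⦄, y ∈ T → S.mul x y ∈ T)
    (hd : ∀ ⦃x⦄, x ∈ T → ∀ ⦃y⦄, y ∈ T → S.ldiv x y ∈ T) : LeftQuasigroup T where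
  mul a b := ⟨S.mul a b, hm a.2 b.2⟩
  ldiv a b := ⟨S.ldiv a b, hd a.2 b.2⟩
  mul_ldiv a b := Subtype.ext (S.mul_ldiv a b)
  ldiv_mul a b := Subtype.ext (S.ldiv_mul a b)

/-- `Q` is superconnected: every subalgebra is connected. -/
def Superconnected (S : LeftQuasigroup Q) : Prop :=
  ∀ (T : Set Q) (hm : ∀ ⦃x⦄, x ∈ T → ∀ ⦃y⦄, y ∈ T → S.mul x y ∈ T)
    (hd : ∀ ⦃x⦄, x ∈ T → ∀ ⦃y⦄, y ∈ T → S.ldiv x y ∈ T),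
    (S.sub T hm hd).Connected

/-- `Q` is idempotent: `x ⬝ x = x`. -/
def Idempotent (S : LeftQuasigroup Q) : Prop := ∀ x : Q, S.mul x x = x

/-- `Q` is latin: all right translations are bijective. -/
def Latin (S : LeftQuasigroup Q) : Prop :=
  ∀ x : Q, Function.Bijective fun y => S.mul y x

/-- `Q` is semiregular: the stabilizer of any point in `Dis(Q)` is trivial. -/
def Semiregular (S : LeftQuasigroup Q) : Prop :=
  ∀ x : Q, ∀ h ∈ S.Dis, h x = x → h = 1

/-- The term operations of a left quasigroup: the clone generated by `⬝` and `\`. -/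
inductive IsTermOp (S : LeftQuasigroup Q) : {n : ℕ} → ((Fin n → Q) → Q) → Prop
  | proj {n : ℕ} (i : Fin n) : IsTermOp S fun v => v i
  | mul {n : ℕ} {t s : (Fin n → Q) → Q} :
      IsTermOp S t → IsTermOp S s → IsTermOp S fun v => S.mul (t v) (s v)
  | ldiv {n : ℕ} {t s : (Fin n → Q) → Q} :
      IsTermOp S t → IsTermOp S s → IsTermOp S fun v => S.ldiv (t v) (s v)

/-- The centrality relation `C(α, β; δ)` of commutator theory. -/
def Centralizes (S : LeftQuasigroup Q) (α β δ : Setoid Q) : Prop :=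
  ∀ (n : ℕ) (t : (Fin (n + 1) → Q) → Q), S.IsTermOp t →
    ∀ x y : Q, α.r x y → ∀ z u : Fin n → Q, (∀ i, β.r (z i) (u i)) →
      δ.r (t (Fin.cons x z)) (t (Fin.cons x u)) →
      δ.r (t (Fin.cons y z)) (t (Fin.cons y u))

/-- The center `ζ_Q`: the largest central congruence. -/
def center (S : LeftQuasigroup Q) : Setoid Q :=
  sSup {β : Setoid Q | S.IsCongruence β ∧ S.Centralizes β ⊤ ⊥}

/-- The upper central series: `ζ_0 = 0_Q` and `ζ_{n+1}/ζ_n = ζ_{Q/ζ_n}`. -/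
def zeta (S : LeftQuasigroup Q) : ℕ → Setoid Q
  | 0 => ⊥
  | n + 1 =>
      sSup {β : Setoid Q | S.IsCongruence β ∧ S.zeta n ≤ β ∧ S.Centralizes β ⊤ (S.zeta n)}

/-- `Q` is nilpotent: the upper central series reaches `1_Q`. -/
def Nilpotent (S : LeftQuasigroup Q) : Prop := ∃ n : ℕ, S.zeta n = ⊤

/-- The variety generated by `Q` has a Malt'sev term. -/
def Maltsev (S : LeftQuasigroup Q) : Prop :=
  ∃ m : Q → Q → Q → Q,
    S.IsTermOp (n := 3) (fun v => m (v 0) (v 1) (v 2)) ∧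
    ∀ x y : Q, m x y y = x ∧ m y y x = x

/-- The central extension `E = Aff(Q, A, g, f, θ)` of `Q` by an abelian group `A`. -/
def affExt (S : LeftQuasigroup Q) (A : Type*) [AddCommGroup A]
    (g : A →+ A) (f : AddAut A) (θ : Q → Q → A) : LeftQuasigroup (Q × A) where
  mul p q := (S.mul p.1 q.1, g p.2 + f q.2 + θ p.1 q.1)
  ldiv p q := (S.ldiv p.1 q.1, f.symm (q.2 - g p.2 - θ p.1 (S.ldiv p.1 q.1)))
  mul_ldiv := by
    rintro ⟨x, a⟩ ⟨y, b⟩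
    dsimp only
    rw [S.mul_ldiv, AddEquiv.apply_symm_apply]
    refine Prod.ext rfl ?_
    dsimp only
    abel
  ldiv_mul := by
    rintro ⟨x, a⟩ ⟨y, b⟩
    dsimp only
    rw [S.ldiv_mul]
    refine Prod.ext rfl ?_
    dsimp only
    have h : g a + f b + θ x y - g a - θ x y = f b := by abel
    rw [h, AddEquiv.symm_apply_apply]

/-- The affine left quasigroup `Aff(A, g, f, c)`: `a ⬝ b = g(a) + f(b) + c`. -/
def affine {A : Type*} [AddCommGroup A] (g : A →+ A) (f : AddAut A) (c : A) :
    LeftQuasigroup A where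
  mul a b := g a + f b + c
  ldiv a b := f.symm (b - g a - c)
  mul_ldiv := by
    intro a b
    rw [AddEquiv.apply_symm_apply]
    abel
  ldiv_mul := by
    intro a b
    have h : g a + f b + c - g a - c = f b := by abel
    rw [h, AddEquiv.symm_apply_apply]

/-- The relation `α_N` on `Q × A`: `(x,a) α_N (y,b)` iff `x = y` and `a - b ∈ N`. -/
def prodCongr (Q : Type*) {A : Type*} [AddCommGroup A] (N : AddSubgroup A) :
    Setoid (Q × A) where
  r p q := p.1 = q.1 ∧ p.2 - q.2 ∈ N
  iseqv := by
    constructor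
    · exact fun p => ⟨rfl, by simpa using N.zero_mem⟩
    · rintro p q ⟨h1, h2⟩
      exact ⟨h1.symm, by simpa using N.neg_mem h2⟩
    · rintro p q r ⟨h1, h2⟩ ⟨h1', h2'⟩
      exact ⟨h1.trans h1', by simpa [sub_add_sub_cancel] using N.add_mem h2 h2'⟩



section Statement18Aux

variable (S : LeftQuasigroup Q)

/-- Evaluation of a formal word of left translations and their inverses. -/
def wEval {ι : Type*} (w : List (Bool × ι)) (v : ι → Q) : Equiv.Perm Q :=
  (w.map fun bi => cond bi.1 (S.L (v bi.2)) (S.L (v bi.2))⁻¹).prod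

lemma wEval_nil {ι : Type*} (v : ι → Q) : S.wEval ([] : List (Bool × ι)) v = 1 := rfl

lemma wEval_cons {ι : Type*} (b : Bool) (i : ι) (w : List (Bool × ι)) (v : ι → Q) :
    S.wEval ((b, i) :: w) v = cond b (S.L (v i)) (S.L (v i))⁻¹ * S.wEval w v := by
  simp [wEval]

lemma wEval_append {ι : Type*} (w₁ w₂ : List (Bool × ι)) (v : ι → Q) :
    S.wEval (w₁ ++ w₂) v = S.wEval w₁ v * S.wEval w₂ v := by
  simp [wEval]

/-- The formal inverse of a word. -/
def winv {ι : Type*} (w : List (Bool × ι)) : List (Bool × ι) :=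
  (w.map fun bi => (!bi.1, bi.2)).reverse

lemma winv_cons {ι : Type*} (b : Bool) (i : ι) (w : List (Bool × ι)) :
    winv ((b, i) :: w) = winv w ++ [(!b, i)] := by simp [winv]

lemma mem_winv {ι : Type*} {w : List (Bool × ι)} {bi : Bool × ι} (h : bi ∈ winv w) :
    ∃ b, (b, bi.2) ∈ w := by
  simp only [winv, List.mem_reverse, List.mem_map] at h
  obtain ⟨⟨b, j⟩, hj, he⟩ := h
  refine ⟨b, ?_⟩
  have : j = bi.2 := congrArg Prod.snd he
  rwa [this] at hj

lemma wEval_winv {ι : Type*} (w : List (Bool × ι)) (v : ι → Q) :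
    S.wEval (winv w) v = (S.wEval w v)⁻¹ := by
  induction w with
  | nil => simp [winv, wEval]
  | cons bi w ih =>
    obtain ⟨b, i⟩ := bi
    rw [winv_cons, wEval_append, ih]
    cases b <;> simp [wEval, mul_inv_rev, mul_assoc]

/-- The exponent sum of a word. -/
def esum {ι : Type*} (w : List (Bool × ι)) : ℤ :=
  (w.map fun bi => cond bi.1 1 (-1)).sum

lemma esum_cons {ι : Type*} (b : Bool) (i : ι) (w : List (Bool × ι)) :
    esum ((b, i) :: w) = cond b 1 (-1) + esum w := by simp [esum]

lemma esum_append {ι : Type*} (w₁ w₂ : List (Bool × ι)) :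
    esum (w₁ ++ w₂) = esum w₁ + esum w₂ := by simp [esum]

lemma esum_winv {ι : Type*} (w : List (Bool × ι)) : esum (winv w) = -esum w := by
  induction w with
  | nil => simp [winv, esum]
  | cons bi w ih =>
    obtain ⟨b, i⟩ := bi
    rw [winv_cons, esum_append, ih, esum_cons]
    cases b <;> simp [esum]

lemma wEval_congr {ι : Type*} (w : List (Bool × ι)) {v v' : ι → Q}
    (h : ∀ bi ∈ w, v bi.2 = v' bi.2) : S.wEval w v = S.wEval w v' := by
  induction w with
  | nil => rfl
  | cons bi w ih =>
    obtain ⟨b, i⟩ := bi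
    rw [wEval_cons, wEval_cons, h (b, i) (by simp),
      ih (fun bj hj => h bj (by simp [hj]))]

lemma wEval_const {ι : Type*} (w : List (Bool × ι)) (v : ι → Q) (a : Q)
    (h : ∀ bi ∈ w, v bi.2 = a) : S.wEval w v = S.L a ^ esum w := by
  induction w with
  | nil => simp [esum, wEval]
  | cons bi w ih =>
    obtain ⟨b, i⟩ := bi
    rw [wEval_cons, h (b, i) (by simp), ih (fun bj hj => h bj (by simp [hj])),
      esum_cons, zpow_add]
    cases b <;> simp

end Statement18Aux
section Statement18Aux2

variable (S : LeftQuasigroup Q)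

/-- Reindex a word over `Q` by consecutive natural number variables starting at `i0`. -/
def reindex : List (Bool × Q) → ℕ → List (Bool × ℕ)
  | [], _ => []
  | (b, _) :: w, i => (b, i) :: reindex w (i + 1)

lemma mem_reindex {Q : Type*} (W : List (Bool × Q)) : ∀ (i0 : ℕ) (bi : Bool × ℕ),
    bi ∈ reindex W i0 → i0 ≤ bi.2 ∧ bi.2 < i0 + W.length := by
  induction W with
  | nil => intro i0 bi h; simp [reindex] at h
  | cons bc W ih =>
    intro i0 bi h
    obtain ⟨b, c⟩ := bc
    rcases List.mem_cons.1 h with h | h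
    · subst h; simp
    · have := ih (i0 + 1) bi h
      simp only [List.length_cons]
      omega

lemma esum_reindex {Q : Type*} (W : List (Bool × Q)) : ∀ i0 : ℕ,
    esum (reindex W i0) = esum W := by
  induction W with
  | nil => intro _; rfl
  | cons bc W ih =>
    intro i0
    obtain ⟨b, c⟩ := bc
    show esum ((b, i0) :: reindex W (i0 + 1)) = _
    rw [esum_cons, esum_cons, ih]

lemma wEval_reindex (W : List (Bool × Q)) : ∀ (i0 : ℕ) (v : ℕ → Q),
    (∀ j (hj : j < W.length), v (i0 + j) = (W.get ⟨j, hj⟩).2) →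
    S.wEval (reindex W i0) v = S.wEval W id := by
  induction W with
  | nil => intro i0 v _; rfl
  | cons bc W ih =>
    intro i0 v hv
    obtain ⟨b, c⟩ := bc
    show S.wEval ((b, i0) :: reindex W (i0 + 1)) v = S.wEval ((b, c) :: W) id
    rw [wEval_cons, wEval_cons]
    have h0 : v i0 = c := by simpa using hv 0 (by simp)
    rw [h0]
    have hrest : S.wEval (reindex W (i0 + 1)) v = S.wEval W id := by
      apply ih
      intro j hj
      have h1 := hv (j + 1) (by simp [Nat.succ_lt_succ hj])
      have h2 : i0 + (j + 1) = i0 + 1 + j := by omega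
      rw [h2] at h1
      rw [h1]
      rfl
    rw [hrest]
    rfl

lemma isTermOp_wEval {ι : Type*} (w : List (Bool × ι)) {n : ℕ} (f : ι → Fin n)
    {s : (Fin n → Q) → Q} (hs : S.IsTermOp s) :
    S.IsTermOp (fun v => S.wEval w (fun i => v (f i)) (s v)) := by
  induction w with
  | nil => exact hs
  | cons bi w ih =>
    obtain ⟨b, i⟩ := bi
    cases b
    · have he : (fun v : Fin n → Q => S.wEval ((false, i) :: w) (fun j => v (f j)) (s v))
          = fun v => S.ldiv (v (f i)) (S.wEval w (fun j => v (f j)) (s v)) := by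
        funext v
        rw [wEval_cons]
        rfl
      rw [he]
      exact IsTermOp.ldiv (IsTermOp.proj (f i)) ih
    · have he : (fun v : Fin n → Q => S.wEval ((true, i) :: w) (fun j => v (f j)) (s v))
          = fun v => S.mul (v (f i)) (S.wEval w (fun j => v (f j)) (s v)) := by
        funext v
        rw [wEval_cons]
        rfl
      rw [he]
      exact IsTermOp.mul (IsTermOp.proj (f i)) ih

lemma exists_word_of_mem_LMlt {h : Equiv.Perm Q} (hh : h ∈ S.LMlt) :
    ∃ W : List (Bool × Q), S.wEval W id = h := by
  induction hh using Subgroup.closure_induction with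
  | mem g hg =>
    obtain ⟨a, rfl⟩ := hg
    exact ⟨[(true, a)], by simp [wEval]⟩
  | one => exact ⟨[], rfl⟩
  | mul g₁ g₂ _ _ ih₁ ih₂ =>
    obtain ⟨W₁, rfl⟩ := ih₁
    obtain ⟨W₂, rfl⟩ := ih₂
    exact ⟨W₁ ++ W₂, S.wEval_append W₁ W₂ id⟩
  | inv g _ ih =>
    obtain ⟨W, rfl⟩ := ih
    exact ⟨winv W, S.wEval_winv W id⟩

lemma exists_word_of_mem_Dis {h : Equiv.Perm Q} (hh : h ∈ S.Dis) :
    ∃ W : List (Bool × Q), S.wEval W id = h ∧ esum W = 0 := by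
  induction hh using Subgroup.closure_induction with
  | mem g hg =>
    obtain ⟨a, b, rfl⟩ := hg
    exact ⟨[(true, a), (false, b)], by simp [wEval], by simp [esum]⟩
  | one => exact ⟨[], rfl, rfl⟩
  | mul g₁ g₂ _ _ ih₁ ih₂ =>
    obtain ⟨W₁, rfl, h₁⟩ := ih₁
    obtain ⟨W₂, rfl, h₂⟩ := ih₂
    exact ⟨W₁ ++ W₂, S.wEval_append W₁ W₂ id, by rw [esum_append, h₁, h₂]; ring⟩
  | inv g _ ih =>
    obtain ⟨W, rfl, h₁⟩ := ih
    exact ⟨winv W, S.wEval_winv W id, by rw [esum_winv, h₁]; ring⟩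

lemma top_rel (a b : Q) : (⊤ : Setoid Q).r a b := by
  show (⊤ : Setoid Q) a b
  rw [Setoid.top_def]
  trivial

lemma bot_rel {a b : Q} : (⊥ : Setoid Q).r a b ↔ a = b := by
  show (⊥ : Setoid Q) a b ↔ a = b
  rw [Setoid.bot_def]

end Statement18Aux2
section Statement18Aux3

variable (S : LeftQuasigroup Q)

/-- Clamp a natural number into `Fin (n+1)`. -/
def clampF (n : ℕ) : ℕ → Fin (n + 1) := fun i => if hi : i < n + 1 then ⟨i, hi⟩ else 0

lemma cons_clamp {N : ℕ} (w : Q) (ν : ℕ → Q) (i : ℕ) (hi : i < N + 1) :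
    (Fin.cons w (fun j : Fin N => ν (j.1 + 1)) : Fin (N + 1) → Q) (clampF N i)
      = if i = 0 then w else ν i := by
  have hf : clampF N i = ⟨i, hi⟩ := dif_pos hi
  rw [hf]
  cases i with
  | zero => simp
  | succ j =>
    have hj : j < N := by omega
    have hs : (⟨j + 1, hi⟩ : Fin (N + 1)) = Fin.succ ⟨j, hj⟩ := rfl
    rw [hs, Fin.cons_succ]
    simp

/-- The term used in the stabilizer-transfer argument. -/
def wTerm (W : List (Bool × Q)) : (Fin (W.length + 1) → Q) → Q :=
  fun v => S.wEval (reindex W 1) (fun i => v (clampF W.length i)) (v 0)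

lemma wTerm_isTermOp (W : List (Bool × Q)) : S.IsTermOp (S.wTerm W) :=
  S.isTermOp_wEval (reindex W 1) (clampF W.length) (IsTermOp.proj 0)

lemma wTerm_apply (W : List (Bool × Q)) (w : Q) (ν : ℕ → Q)
    (hν : ∀ j (hj : j < W.length), ν (1 + j) = (W.get ⟨j, hj⟩).2) :
    S.wTerm W (Fin.cons w (fun j : Fin W.length => ν (j.1 + 1))) = S.wEval W id w := by
  unfold wTerm
  rw [Fin.cons_zero]
  have h1 : S.wEval (reindex W 1)
      (fun i => (Fin.cons w (fun j : Fin W.length => ν (j.1 + 1)) : Fin (W.length + 1) → Q)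
        (clampF W.length i))
      = S.wEval (reindex W 1) ν := by
    apply S.wEval_congr
    intro bi hbi
    obtain ⟨hb1, hb2⟩ := mem_reindex W 1 bi hbi
    show (Fin.cons w (fun j : Fin W.length => ν (j.1 + 1)) : Fin (W.length + 1) → Q)
        (clampF W.length bi.2) = ν bi.2
    rw [cons_clamp w ν bi.2 (by omega), if_neg (by omega)]
  rw [h1, S.wEval_reindex W 1 ν hν]

lemma wTerm_const (W : List (Bool × Q)) (hsum : esum W = 0) (w a : Q) :
    S.wTerm W (Fin.cons w (fun j : Fin W.length => (fun _ : ℕ => a) (j.1 + 1))) = w := by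
  unfold wTerm
  rw [Fin.cons_zero]
  have h1 : S.wEval (reindex W 1)
      (fun i => (Fin.cons w (fun j : Fin W.length => (fun _ : ℕ => a) (j.1 + 1)) :
          Fin (W.length + 1) → Q) (clampF W.length i))
      = S.L a ^ esum (reindex W 1) := by
    apply S.wEval_const
    intro bi hbi
    obtain ⟨hb1, hb2⟩ := mem_reindex W 1 bi hbi
    show (Fin.cons w (fun j : Fin W.length => (fun _ : ℕ => a) (j.1 + 1)) :
        Fin (W.length + 1) → Q) (clampF W.length bi.2) = a
    rw [cons_clamp w (fun _ => a) bi.2 (by omega), if_neg (by omega)]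
  rw [h1, esum_reindex, hsum]
  rfl

lemma fix_transfer {β : Setoid Q} (hC : S.Centralizes β ⊤ ⊥) {x y : Q} (hxy : β.r x y)
    {h : Equiv.Perm Q} (hh : h ∈ S.Dis) (hfix : h x = x) : h y = y := by
  obtain ⟨W, hW, hsum⟩ := S.exists_word_of_mem_Dis hh
  set ν : ℕ → Q := fun j => if hj : 1 ≤ j ∧ j < 1 + W.length then (W.get ⟨j - 1, by omega⟩).2 else x
    with hνdef
  have hν : ∀ j (hj : j < W.length), ν (1 + j) = (W.get ⟨j, hj⟩).2 := by
    intro j hj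
    simp only [hνdef]
    rw [dif_pos (by omega : 1 ≤ 1 + j ∧ 1 + j < 1 + W.length)]
    have hgen : ∀ (a b : Fin W.length), a.1 = b.1 → (W.get a).2 = (W.get b).2 := by
      intro a b hab
      rw [Fin.ext hab]
    exact hgen _ _ (show 1 + j - 1 = j by omega)
  have hz := fun w : Q => S.wTerm_apply W w ν hν
  have hu := fun w : Q => S.wTerm_const W hsum w x
  have hstep := hC W.length (S.wTerm W) (S.wTerm_isTermOp W) x y hxy
    (fun j : Fin W.length => ν (j.1 + 1)) (fun j : Fin W.length => (fun _ : ℕ => x) (j.1 + 1))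
    (fun i => top_rel _ _)
    (bot_rel.2 (by rw [hz, hu, hW, hfix]))
  have := bot_rel.1 hstep
  rw [hz, hu, hW] at this
  exact this

end Statement18Aux3
section Statement18Aux4

variable (S : LeftQuasigroup Q)

lemma get_snd_congr {Q' : Type*} (W : List (Bool × Q')) (a b : Fin W.length)
    (hab : a.1 = b.1) : (W.get a).2 = (W.get b).2 := by rw [Fin.ext hab]

/-- The word `w_h · L_{v_1} · L_{v_0}⁻¹ · w_h⁻¹` used in the centrality argument. -/
def gWord (Wh : List (Bool × Q)) : List (Bool × ℕ) :=
  reindex Wh 3 ++ ((true, 1) :: (false, 0) :: winv (reindex Wh 3))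

/-- The word for `k` in the centrality argument. -/
def kWord (Wh Wk : List (Bool × Q)) : List (Bool × ℕ) := reindex Wk (3 + Wh.length)

/-- The commutator word `w_k⁻¹ g w_k g⁻¹`. -/
def cWord (Wh Wk : List (Bool × Q)) : List (Bool × ℕ) :=
  winv (kWord Wh Wk) ++ (gWord Wh ++ (kWord Wh Wk ++ winv (gWord Wh)))

lemma gWord_lt (Wh : List (Bool × Q)) : ∀ bi ∈ gWord Wh, bi.2 < 3 + Wh.length := by
  intro bi hbi
  unfold gWord at hbi
  rcases List.mem_append.1 hbi with h | h
  · exact (mem_reindex Wh 3 bi h).2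
  · rcases List.mem_cons.1 h with h | h
    · subst h; omega
    · rcases List.mem_cons.1 h with h | h
      · subst h; omega
      · obtain ⟨b, hb⟩ := mem_winv h
        exact (mem_reindex Wh 3 (b, bi.2) hb).2

lemma cWord_lt (Wh Wk : List (Bool × Q)) :
    ∀ bi ∈ cWord Wh Wk, bi.2 < Wh.length + Wk.length + 2 + 1 := by
  intro bi hbi
  unfold cWord at hbi
  have hk : ∀ bj : Bool × ℕ, bj ∈ kWord Wh Wk → bj.2 < Wh.length + Wk.length + 2 + 1 := by
    intro bj hbj
    have := (mem_reindex Wk (3 + Wh.length) bj hbj).2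
    omega
  have hg : ∀ bj : Bool × ℕ, bj ∈ gWord Wh → bj.2 < Wh.length + Wk.length + 2 + 1 := by
    intro bj hbj
    have := gWord_lt Wh bj hbj
    omega
  rcases List.mem_append.1 hbi with h | h
  · obtain ⟨b, hb⟩ := mem_winv h
    exact hk (b, bi.2) hb
  rcases List.mem_append.1 h with h | h
  · exact hg bi h
  rcases List.mem_append.1 h with h | h
  · exact hk bi h
  · obtain ⟨b, hb⟩ := mem_winv h
    exact hg (b, bi.2) hb

lemma wEval_gWord (Wh : List (Bool × Q)) (μ : ℕ → Q)
    (hμ : ∀ j (hj : j < Wh.length), μ (3 + j) = (Wh.get ⟨j, hj⟩).2) :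
    S.wEval (gWord Wh) μ
      = S.wEval Wh id * (S.L (μ 1) * ((S.L (μ 0))⁻¹ * (S.wEval Wh id)⁻¹)) := by
  unfold gWord
  rw [wEval_append, wEval_cons, wEval_cons, wEval_winv, S.wEval_reindex Wh 3 μ hμ]
  simp only [Bool.cond_true, Bool.cond_false]

lemma wEval_kWord (Wh Wk : List (Bool × Q)) (μ : ℕ → Q)
    (hμ : ∀ j (hj : j < Wk.length), μ (3 + Wh.length + j) = (Wk.get ⟨j, hj⟩).2) :
    S.wEval (kWord Wh Wk) μ = S.wEval Wk id :=
  S.wEval_reindex Wk (3 + Wh.length) μ hμ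

lemma wEval_kWord_const (Wh Wk : List (Bool × Q)) (hsum : esum Wk = 0) (μ : ℕ → Q) (a : Q)
    (hμ : ∀ j, 3 + Wh.length ≤ j → μ j = a) :
    S.wEval (kWord Wh Wk) μ = 1 := by
  have h1 : S.wEval (kWord Wh Wk) μ = S.L a ^ esum (kWord Wh Wk) := by
    apply S.wEval_const
    intro bi hbi
    exact hμ bi.2 (mem_reindex Wk (3 + Wh.length) bi hbi).1
  rw [h1]
  unfold kWord
  rw [esum_reindex, hsum]
  rfl

lemma wEval_cWord (Wh Wk : List (Bool × Q)) (μ : ℕ → Q) :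
    S.wEval (cWord Wh Wk) μ
      = (S.wEval (kWord Wh Wk) μ)⁻¹ *
        (S.wEval (gWord Wh) μ * (S.wEval (kWord Wh Wk) μ * (S.wEval (gWord Wh) μ)⁻¹)) := by
  unfold cWord
  rw [wEval_append, wEval_append, wEval_append, wEval_winv, wEval_winv]

/-- The term `w_k(v)⁻¹ · g(v) · w_k(v) · g(v)⁻¹` applied to `v 2`. -/
def cTerm (Wh Wk : List (Bool × Q)) : (Fin (Wh.length + Wk.length + 2 + 1) → Q) → Q :=
  fun v => S.wEval (cWord Wh Wk) (fun i => v (clampF (Wh.length + Wk.length + 2) i))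
    (v (clampF (Wh.length + Wk.length + 2) 2))

lemma cTerm_isTermOp (Wh Wk : List (Bool × Q)) : S.IsTermOp (S.cTerm Wh Wk) :=
  S.isTermOp_wEval (cWord Wh Wk) (clampF (Wh.length + Wk.length + 2))
    (IsTermOp.proj (clampF (Wh.length + Wk.length + 2) 2))

lemma cTerm_apply (Wh Wk : List (Bool × Q)) (w : Q) (τ : ℕ → Q) :
    S.cTerm Wh Wk (Fin.cons w (fun j : Fin (Wh.length + Wk.length + 2) => τ (j.1 + 1)))
      = S.wEval (cWord Wh Wk) (fun i => if i = 0 then w else τ i) (τ 2) := by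
  unfold cTerm
  have h2 : (Fin.cons w (fun j : Fin (Wh.length + Wk.length + 2) => τ (j.1 + 1)) :
      Fin (Wh.length + Wk.length + 2 + 1) → Q) (clampF (Wh.length + Wk.length + 2) 2)
      = τ 2 := by
    rw [cons_clamp w τ 2 (by omega), if_neg (by omega)]
  rw [h2]
  have h1 : S.wEval (cWord Wh Wk)
      (fun i => (Fin.cons w (fun j : Fin (Wh.length + Wk.length + 2) => τ (j.1 + 1)) :
        Fin (Wh.length + Wk.length + 2 + 1) → Q) (clampF (Wh.length + Wk.length + 2) i))
      = S.wEval (cWord Wh Wk) (fun i => if i = 0 then w else τ i) := by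
    apply S.wEval_congr
    intro bi hbi
    show (Fin.cons w (fun j : Fin (Wh.length + Wk.length + 2) => τ (j.1 + 1)) :
        Fin (Wh.length + Wk.length + 2 + 1) → Q) (clampF (Wh.length + Wk.length + 2) bi.2)
        = if bi.2 = 0 then w else τ bi.2
    exact cons_clamp w τ bi.2 (cWord_lt Wh Wk bi hbi)
  rw [h1]

end Statement18Aux4
section Statement18Aux5

variable (S : LeftQuasigroup Q)

lemma commute_transfer {β : Setoid Q} (hC : S.Centralizes β ⊤ ⊥) {x y : Q} (hxy : β.r x y)
    {h k : Equiv.Perm Q} (hh : h ∈ S.LMlt) (hk : k ∈ S.Dis) :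
    (h * (S.L x * (S.L y)⁻¹) * h⁻¹) * k = k * (h * (S.L x * (S.L y)⁻¹) * h⁻¹) := by
  obtain ⟨Wh, hWh⟩ := S.exists_word_of_mem_LMlt hh
  obtain ⟨Wk, hWk, hsum⟩ := S.exists_word_of_mem_Dis hk
  have hGy : h * (S.L x * (S.L y)⁻¹) * h⁻¹ = h * (S.L x * ((S.L y)⁻¹ * h⁻¹)) := by
    simp [mul_assoc]
  rw [hGy]
  suffices hq : ∀ q : Q,
      (k⁻¹ * (h * (S.L x * ((S.L y)⁻¹ * h⁻¹)) * (k * (h * (S.L x * ((S.L y)⁻¹ * h⁻¹)))⁻¹))) q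
        = q by
    have he : k⁻¹ * (h * (S.L x * ((S.L y)⁻¹ * h⁻¹)) *
        (k * (h * (S.L x * ((S.L y)⁻¹ * h⁻¹)))⁻¹)) = 1 := Equiv.ext fun q => hq q
    have he2 := congrArg (fun p => k * p * (h * (S.L x * ((S.L y)⁻¹ * h⁻¹)))) he
    simpa [mul_assoc] using he2
  intro q
  -- the valuations
  set ν : ℕ → Q := fun j =>
    if j = 1 then x else if j = 2 then q
    else if hj : 3 ≤ j ∧ j < 3 + Wh.length then (Wh.get ⟨j - 3, by omega⟩).2
    else if hj : 3 + Wh.length ≤ j ∧ j < 3 + Wh.length + Wk.length then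
      (Wk.get ⟨j - (3 + Wh.length), by omega⟩).2
    else x with hνdef
  set νu : ℕ → Q := fun j => if 3 + Wh.length ≤ j then x else ν j with hνudef
  -- values of ν
  have hν1 : ν 1 = x := by simp [hνdef]
  have hν2 : ν 2 = q := by simp [hνdef]
  have hνh : ∀ j (hj : j < Wh.length), ν (3 + j) = (Wh.get ⟨j, hj⟩).2 := by
    intro j hj
    simp only [hνdef]
    rw [if_neg (by omega), if_neg (by omega), dif_pos (by omega : 3 ≤ 3 + j ∧ 3 + j < 3 + Wh.length)]
    exact get_snd_congr Wh _ _ (show 3 + j - 3 = j by omega)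
  have hνk : ∀ j (hj : j < Wk.length), ν (3 + Wh.length + j) = (Wk.get ⟨j, hj⟩).2 := by
    intro j hj
    simp only [hνdef]
    rw [if_neg (by omega), if_neg (by omega), dif_neg (by omega),
      dif_pos (by omega : 3 + Wh.length ≤ 3 + Wh.length + j ∧
        3 + Wh.length + j < 3 + Wh.length + Wk.length)]
    exact get_snd_congr Wk _ _ (show 3 + Wh.length + j - (3 + Wh.length) = j by omega)
  have hνu1 : νu 1 = x := by rw [hνudef]; simp only; rw [if_neg (by omega), hν1]
  have hνu2 : νu 2 = q := by rw [hνudef]; simp only; rw [if_neg (by omega), hν2]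
  have hνuh : ∀ j (hj : j < Wh.length), νu (3 + j) = (Wh.get ⟨j, hj⟩).2 := by
    intro j hj
    simp only [hνudef]
    rw [if_neg (by omega)]
    exact hνh j hj
  -- evaluations of the four instances
  have keyz : ∀ w : Q,
      S.cTerm Wh Wk (Fin.cons w (fun j : Fin (Wh.length + Wk.length + 2) => ν (j.1 + 1)))
        = (k⁻¹ * (h * (S.L x * ((S.L w)⁻¹ * h⁻¹)) *
            (k * (h * (S.L x * ((S.L w)⁻¹ * h⁻¹)))⁻¹))) q := by
    intro w
    rw [S.cTerm_apply Wh Wk w ν, S.wEval_cWord]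
    have hμh : ∀ j (hj : j < Wh.length),
        (fun i => if i = 0 then w else ν i) (3 + j) = (Wh.get ⟨j, hj⟩).2 := by
      intro j hj
      simp only [if_neg (show ¬(3 + j = 0) by omega)]
      exact hνh j hj
    have hμk : ∀ j (hj : j < Wk.length),
        (fun i => if i = 0 then w else ν i) (3 + Wh.length + j) = (Wk.get ⟨j, hj⟩).2 := by
      intro j hj
      simp only [if_neg (show ¬(3 + Wh.length + j = 0) by omega)]
      exact hνk j hj
    rw [S.wEval_gWord Wh _ hμh, S.wEval_kWord Wh Wk _ hμk, hWh, hWk, hν2]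
    simp only [if_neg (show ¬(1 = 0) by omega), if_pos rfl, if_true, hν1]
  have keyu : ∀ w : Q,
      S.cTerm Wh Wk (Fin.cons w (fun j : Fin (Wh.length + Wk.length + 2) => νu (j.1 + 1)))
        = ((h * (S.L x * ((S.L w)⁻¹ * h⁻¹))) *
            ((h * (S.L x * ((S.L w)⁻¹ * h⁻¹)))⁻¹)) q := by
    intro w
    rw [S.cTerm_apply Wh Wk w νu, S.wEval_cWord]
    have hμh : ∀ j (hj : j < Wh.length),
        (fun i => if i = 0 then w else νu i) (3 + j) = (Wh.get ⟨j, hj⟩).2 := by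
      intro j hj
      simp only [if_neg (show ¬(3 + j = 0) by omega)]
      exact hνuh j hj
    have hμk : S.wEval (kWord Wh Wk) (fun i => if i = 0 then w else νu i) = 1 := by
      apply S.wEval_kWord_const Wh Wk hsum _ x
      intro j hj
      rw [if_neg (by omega)]
      simp only [hνudef]
      rw [if_pos hj]
    rw [S.wEval_gWord Wh _ hμh, hμk, hWh, hνu2]
    simp only [if_neg (show ¬(1 = 0) by omega), if_pos rfl, if_true, hνu1, inv_one, one_mul,
      mul_one]
  -- apply the centralizing property
  have hstep := hC (Wh.length + Wk.length + 2) (S.cTerm Wh Wk) (S.cTerm_isTermOp Wh Wk) x y hxy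
    (fun j : Fin (Wh.length + Wk.length + 2) => ν (j.1 + 1))
    (fun j : Fin (Wh.length + Wk.length + 2) => νu (j.1 + 1))
    (fun i => top_rel _ _)
    (bot_rel.2 (by
      rw [keyz x, keyu x]
      have hone : h * (S.L x * ((S.L x)⁻¹ * h⁻¹)) = 1 := by
        simp [mul_assoc]
      rw [hone]
      simp))
  have hyy := bot_rel.1 hstep
  rw [keyz y, keyu y] at hyy
  have : ((h * (S.L x * ((S.L y)⁻¹ * h⁻¹))) * ((h * (S.L x * ((S.L y)⁻¹ * h⁻¹)))⁻¹)) q = q := by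
    simp
  rw [this] at hyy
  exact hyy

end Statement18Aux5
/-- If `α ≤ ζ_Q`, then `Dis_α` is central in `Dis(Q)` and `Dis(Q)_x = Dis(Q)_y`
whenever `x α y`. -/
theorem statement_18 {Q : Type*} (S : LeftQuasigroup Q) (α : Setoid Q)
    (hα : S.IsCongruence α) (hle : α ≤ S.center) :
    (∀ h ∈ S.disRel α, ∀ k ∈ S.Dis, h * k = k * h) ∧
    ∀ x y : Q, α.r x y → ∀ h ∈ S.Dis, (h x = x ↔ h y = y) := by
  constructor
  · -- centrality of `Dis_α`
    have hR1 : ∀ x y : Q, α.r x y → ∀ h ∈ S.LMlt, ∀ k ∈ S.Dis,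
        (h * (S.L x * (S.L y)⁻¹) * h⁻¹) * k = k * (h * (S.L x * (S.L y)⁻¹) * h⁻¹) := by
      set R1 : Setoid Q :=
        { r := fun x y => ∀ h ∈ S.LMlt, ∀ k ∈ S.Dis,
            (h * (S.L x * (S.L y)⁻¹) * h⁻¹) * k = k * (h * (S.L x * (S.L y)⁻¹) * h⁻¹)
          iseqv := by
            constructor
            · intro x h hh k hk
              have e : h * (S.L x * (S.L x)⁻¹) * h⁻¹ = 1 := by simp
              rw [e, one_mul, mul_one]
            · intro x y hR h hh k hk
              have e : h * (S.L y * (S.L x)⁻¹) * h⁻¹ = (h * (S.L x * (S.L y)⁻¹) * h⁻¹)⁻¹ := by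
                simp [mul_assoc]
              rw [e]
              have hc : Commute (h * (S.L x * (S.L y)⁻¹) * h⁻¹) k := hR h hh k hk
              exact hc.inv_left
            · intro x y z h1 h2 h hh k hk
              have e : h * (S.L x * (S.L z)⁻¹) * h⁻¹
                  = (h * (S.L x * (S.L y)⁻¹) * h⁻¹) * (h * (S.L y * (S.L z)⁻¹) * h⁻¹) := by
                simp [mul_assoc]
              rw [e]
              have hc1 : Commute (h * (S.L x * (S.L y)⁻¹) * h⁻¹) k := h1 h hh k hk
              have hc2 : Commute (h * (S.L y * (S.L z)⁻¹) * h⁻¹) k := h2 h hh k hk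
              exact hc1.mul_left hc2 } with hR1def
      have hle1 : S.center ≤ R1 := by
        unfold center
        exact sSup_le (fun β hβ => fun x y hxy h hh k hk =>
          S.commute_transfer hβ.2 hxy hh hk)
      intro x y hxy
      exact (le_trans hle hle1) hxy
    intro g hg k hk
    have hg' : g ∈ Subgroup.closure
        {g : Equiv.Perm Q | ∃ x y h, α.r x y ∧ h ∈ S.LMlt ∧ g = h * (S.L x * (S.L y)⁻¹) * h⁻¹} :=
      hg
    clear hg
    induction hg' using Subgroup.closure_induction with
    | mem g' hmem =>
      obtain ⟨x, y, h, hxy, hh, rfl⟩ := hmem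
      exact hR1 x y hxy h hh k hk
    | one => rw [one_mul, mul_one]
    | mul a b _ _ ha hb => rw [mul_assoc, hb, ← mul_assoc, ha, mul_assoc]
    | inv a _ ha =>
      have hc : Commute a k := ha
      exact hc.inv_left
  · -- stabilizers
    have hR2 : ∀ x y : Q, α.r x y → ∀ h ∈ S.Dis, (h x = x ↔ h y = y) := by
      set R2 : Setoid Q :=
        { r := fun x y => ∀ h ∈ S.Dis, (h x = x ↔ h y = y)
          iseqv := by
            constructor
            · intro x h hh; rfl
            · intro x y hR h hh; exact (hR h hh).symm
            · intro x y z h1 h2 h hh; exact (h1 h hh).trans (h2 h hh) } with hR2def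
      have hle2 : S.center ≤ R2 := by
        unfold center
        exact sSup_le (fun β hβ => fun x y hxy h hh =>
          ⟨fun hf => S.fix_transfer hβ.2 hxy hh hf,
           fun hf => S.fix_transfer hβ.2 (β.iseqv.symm hxy) hh hf⟩)
      intro x y hxy
      exact (le_trans hle hle2) hxy
    exact hR2
end LeftQuasigroup
end PaperLQ
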